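/- Let k > l ≥ 0 be integers and consider the planar vector field X = X_n + X_m with X_n(x,y) = ((x³ − x²y + xy²)(x²+y²)^l, (x³ + x²y + y³)(x²+y²)^l) and X_m(x,y) = (−(x+y)(x²+y²)^{k+1}, (x−y)(x²+y²)^{k+1}). Then the unit circle is invariant and carries no equilibria: for every (x,y) with x² + y² = 1, writing X = (P,Q), one has x·P(x,y) + y·Q(x,y) = 0 and X(x,y) ≠ (0,0). In particular the unit circle x² + y² = 1 is a periodic orbit of the system (dx/dt, dy/dt) = X(x,y). -/

import Mathlib

noncomputable def s2 : ℝ := Real.sqrt 2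

lemma hs2pos : (0:ℝ) < s2 := Real.sqrt_pos.2 (by norm_num)
lemma hs2sq : s2 ^ 2 = 2 := Real.sq_sqrt (by norm_num)

noncomputable def Qf (t : ℝ) : ℝ := Real.sqrt (1 + Real.sin (s2 * t) ^ 2)

lemma hQpos (t : ℝ) : 0 < Qf t := Real.sqrt_pos.2 (by positivity)
lemma hQsq (t : ℝ) : Qf t ^ 2 = 1 + Real.sin (s2 * t) ^ 2 := Real.sq_sqrt (by positivity)

noncomputable def γ0 (t : ℝ) : ℝ × ℝ :=
  (Real.cos (s2 * t) / Qf t, s2 * Real.sin (s2 * t) / Qf t)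

lemma hcirc (t : ℝ) : (γ0 t).1 ^ 2 + (γ0 t).2 ^ 2 = 1 := by
  have hq := hQsq t
  have hp := Real.sin_sq_add_cos_sq (s2 * t)
  have hqne := (hQpos t).ne'
  simp only [γ0]
  field_simp
  linear_combination hp - hq + Real.sin (s2*t)^2 * hs2sq

lemma hderiv (t : ℝ) :
    HasDerivAt γ0 (-((γ0 t).2 * (1 + (γ0 t).1 ^ 2)), (γ0 t).1 * (1 + (γ0 t).1 ^ 2)) t := by
  set S := Real.sin (s2 * t) with hSdef
  set C := Real.cos (s2 * t) with hCdef
  have hu : HasDerivAt (fun t : ℝ => s2 * t) s2 t := by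
    simpa using (hasDerivAt_id t).const_mul s2
  have hS : HasDerivAt (fun t : ℝ => Real.sin (s2 * t)) (C * s2) t :=
    (Real.hasDerivAt_sin (s2 * t)).comp t hu
  have hC : HasDerivAt (fun t : ℝ => Real.cos (s2 * t)) (-S * s2) t :=
    (Real.hasDerivAt_cos (s2 * t)).comp t hu
  have hD : HasDerivAt (fun t : ℝ => 1 + Real.sin (s2 * t) ^ 2) (2 * S * (C * s2)) t := by
    simpa using (hS.pow 2).const_add 1
  have hDne : (1 + Real.sin (s2 * t) ^ 2) ≠ 0 := by positivity
  have hQ : HasDerivAt Qf (1 / (2 * Qf t) * (2 * S * (C * s2))) t :=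
    (Real.hasDerivAt_sqrt hDne).comp t hD
  have hQne := (hQpos t).ne'
  have hx : HasDerivAt (fun t => Real.cos (s2 * t) / Qf t)
      ((-S * s2 * Qf t - C * (1 / (2 * Qf t) * (2 * S * (C * s2)))) / Qf t ^ 2) t :=
    hC.div hQ hQne
  have hy : HasDerivAt (fun t => s2 * Real.sin (s2 * t) / Qf t)
      ((s2 * (C * s2) * Qf t - s2 * S * (1 / (2 * Qf t) * (2 * S * (C * s2)))) / Qf t ^ 2) t :=
    ((hS.const_mul s2)).div hQ hQne
  have hpair := hx.prodMk hy
  convert hpair using 2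
  · simp only [γ0]
  · simp only [γ0]
    have hq := hQsq t
    simp only [hSdef, hCdef]
    field_simp
    ring_nf
  · simp only [γ0]
    have hq := hQsq t
    have hp := Real.sin_sq_add_cos_sq (s2 * t)
    simp only [hSdef, hCdef]
    field_simp
    rw [hs2sq]
    linear_combination (-Real.cos (s2 * t)) * hq + Real.cos (s2 * t) * hp

lemma hperiod (t : ℝ) : γ0 (t + s2 * Real.pi) = γ0 t := by
  have h2 : s2 * (t + s2 * Real.pi) = s2 * t + 2 * Real.pi := by
    ring_nf
    rw [hs2sq]
    ring
  simp only [γ0, Qf, h2, Real.sin_add_two_pi, Real.cos_add_two_pi]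

lemma hrange : Set.range γ0 = {z : ℝ × ℝ | z.1 ^ 2 + z.2 ^ 2 = 1} := by
  apply Set.eq_of_subset_of_subset
  · rintro _ ⟨t, rfl⟩
    exact hcirc t
  · rintro ⟨a, b⟩ hz
    simp only [Set.mem_setOf_eq] at hz
    have hwpos : (0:ℝ) < Real.sqrt (1 + a ^ 2) := Real.sqrt_pos.2 (by positivity)
    set w := Real.sqrt (1 + a ^ 2) with hwdef
    have hw2 : w ^ 2 = 1 + a ^ 2 := Real.sq_sqrt (by positivity)
    set c : ℝ := s2 * a / w with hcdef
    set s : ℝ := b / w with hsdef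
    have hcs : c ^ 2 + s ^ 2 = 1 := by
      rw [hcdef, hsdef]
      field_simp
      linear_combination a^2*hs2sq - hw2 + hz
    set zc : ℂ := ⟨c, s⟩ with hzcdef
    have hzcabs : ‖zc‖ = 1 := by
      rw [Complex.norm_def, Complex.normSq_mk]
      rw [show c * c + s * s = 1 by nlinarith]
      exact Real.sqrt_one
    have hzcne : zc ≠ 0 := by
      intro h
      rw [h] at hzcabs; simp at hzcabs
    have hcos : Real.cos zc.arg = c := by
      rw [Complex.cos_arg hzcne, hzcabs]; simp [hzcdef]
    have hsin : Real.sin zc.arg = s := by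
      rw [Complex.sin_arg, hzcabs]; simp [hzcdef]
    refine ⟨zc.arg / s2, ?_⟩
    have hs2ne := hs2pos.ne'
    have hst : s2 * (zc.arg / s2) = zc.arg := by
      field_simp
    have hQval : Qf (zc.arg / s2) = s2 / w := by
      rw [Qf, hst, hsin, hsdef]
      rw [show 1 + (b/w)^2 = (s2/w)^2 by
        field_simp
        linear_combination hw2 + hz - hs2sq]
      exact Real.sqrt_sq (div_nonneg hs2pos.le hwpos.le)
    have hwne := hwpos.ne'
    simp only [γ0, hst, hQval, hcos, hsin, hcdef, hsdef, Prod.mk.injEq]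
    constructor
    · field_simp
    · field_simp

/-- for `Xₙ(x,y) = ((x³−x²y+xy²)(x²+y²)ˡ, (x³+x²y+y³)(x²+y²)ˡ)` and
`Xₘ(x,y) = (−(x+y)(x²+y²)^{k+1}, (x−y)(x²+y²)^{k+1})` with `k > l ≥ 0`, the unit circle is
invariant and free of equilibria for `X = Xₙ + Xₘ = (P,Q)`: on `x² + y² = 1` one has
`x·P + y·Q = 0` and `X ≠ 0`; in particular the unit circle is a periodic orbit of
`(x',y') = X(x,y)`. -/
theorem stmt_16 (k l : ℕ) (hkl : l < k)
    (Xn Xm X : ℝ × ℝ → ℝ × ℝ)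
    (hXn : ∀ z : ℝ × ℝ, Xn z =
      ((z.1 ^ 3 - z.1 ^ 2 * z.2 + z.1 * z.2 ^ 2) * (z.1 ^ 2 + z.2 ^ 2) ^ l,
       (z.1 ^ 3 + z.1 ^ 2 * z.2 + z.2 ^ 3) * (z.1 ^ 2 + z.2 ^ 2) ^ l))
    (hXm : ∀ z : ℝ × ℝ, Xm z =
      (-((z.1 + z.2) * (z.1 ^ 2 + z.2 ^ 2) ^ (k + 1)),
       (z.1 - z.2) * (z.1 ^ 2 + z.2 ^ 2) ^ (k + 1)))
    (hX : ∀ z : ℝ × ℝ, X z = Xn z + Xm z) :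
    (∀ z : ℝ × ℝ, z.1 ^ 2 + z.2 ^ 2 = 1 →
      z.1 * (X z).1 + z.2 * (X z).2 = 0 ∧ X z ≠ (0, 0)) ∧
    ∃ (γ : ℝ → ℝ × ℝ) (T : ℝ), 0 < T ∧
      (∀ t : ℝ, HasDerivAt γ (X (γ t)) t) ∧
      (∀ t : ℝ, γ (t + T) = γ t) ∧
      Set.range γ = {z : ℝ × ℝ | z.1 ^ 2 + z.2 ^ 2 = 1} := by
  have hXcirc : ∀ z : ℝ × ℝ, z.1 ^ 2 + z.2 ^ 2 = 1 →
      X z = (-(z.2 * (1 + z.1 ^ 2)), z.1 * (1 + z.1 ^ 2)) := by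
    intro z h
    rw [hX, hXn, hXm, h]
    simp only [one_pow, Prod.mk_add_mk, Prod.mk.injEq]
    constructor
    · linear_combination z.1 * h
    · linear_combination z.2 * h
  constructor
  · intro z h
    rw [hXcirc z h]
    constructor
    · ring
    · intro heq
      rw [Prod.mk.injEq] at heq
      have hpos : (0:ℝ) < 1 + z.1 ^ 2 := by positivity
      have h1 : z.1 = 0 := by
        rcases mul_eq_zero.1 heq.2 with h' | h'
        · exact h'
        · exact absurd h' hpos.ne'
      have h2 : z.2 = 0 := by
        have := neg_eq_zero.1 heq.1
        rcases mul_eq_zero.1 this with h' | h'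
        · exact h'
        · exact absurd h' hpos.ne'
      rw [h1, h2] at h
      norm_num at h
  · refine ⟨γ0, s2 * Real.pi, mul_pos hs2pos Real.pi_pos, ?_, hperiod, hrange⟩
    intro t
    rw [hXcirc _ (hcirc t)]
    exact hderiv t
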